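/- For every ε > 0 there exists a constant C(ε) such that the following holds. Let p be a prime, Γ a multiplicative subgroup of F_p with C(ε) ≤ |Γ| ≤ p^{6/7−ε}, and ξ ∈ F_p nonzero. Then for every set A ⊆ F_p one has A/A ≠ ξ·Γ + 1. -/

import Mathlib

open Pointwise

/-- `G` is (the underlying set of) a multiplicative subgroup of `F_p`, i.e. a subgroup of the
multiplicative group `F_p^* = F_p \ {0}`, regarded as a subset of `F_p`. -/
def IsMulSubgroup {p : ℕ} (G : Finset (ZMod p)) : Prop :=
  ∃ H : Subgroup (ZMod p)ˣ,
    (G : Set (ZMod p)) = (fun u : (ZMod p)ˣ => (u : ZMod p)) '' (H : Set (ZMod p)ˣ)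

/-- The ratio set `A/A = {a/a' : a, a' ∈ A, a' ≠ 0, a ≠ a'}`. -/
def ratioSet {F : Type*} [Field F] [DecidableEq F] (A : Finset F) : Finset F :=
  ((A ×ˢ A).filter fun t => t.2 ≠ 0 ∧ t.1 ≠ t.2).image fun t => t.1 / t.2

lemma mem_ratioSet_aux {F : Type*} [Field F] [DecidableEq F] {A : Finset F} {x : F} :
    x ∈ ratioSet A ↔ ∃ a b : F, a ∈ A ∧ b ∈ A ∧ b ≠ 0 ∧ a ≠ b ∧ a / b = x := by
  simp only [ratioSet, Finset.mem_image, Finset.mem_filter, Finset.mem_product]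
  constructor
  · rintro ⟨⟨a, b⟩, ⟨⟨ha, hb⟩, hb0, hab⟩, hx⟩
    exact ⟨a, b, ha, hb, hb0, hab, hx⟩
  · rintro ⟨a, b, ha, hb, hb0, hab, hx⟩
    exact ⟨⟨a, b⟩, ⟨⟨ha, hb⟩, hb0, hab⟩, hx⟩

section aux

variable {p : ℕ} [Fact p.Prime] {G : Finset (ZMod p)} {H : Subgroup (ZMod p)ˣ}

lemma mem_G_iff (hH : (G : Set (ZMod p)) = (fun u : (ZMod p)ˣ => (u : ZMod p)) '' (H : Set (ZMod p)ˣ))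
    {a : ZMod p} : a ∈ G ↔ ∃ u : (ZMod p)ˣ, u ∈ H ∧ (u : ZMod p) = a := by
  constructor
  · intro ha
    have h2 : a ∈ (G : Set (ZMod p)) := ha
    rw [hH] at h2
    obtain ⟨u, hu, hua⟩ := h2
    exact ⟨u, hu, hua⟩
  · rintro ⟨u, hu, rfl⟩
    have h2 : (u : ZMod p) ∈ (G : Set (ZMod p)) := by
      rw [hH]; exact ⟨u, hu, rfl⟩
    exact h2

lemma G_ne_zero (hH : (G : Set (ZMod p)) = (fun u : (ZMod p)ˣ => (u : ZMod p)) '' (H : Set (ZMod p)ˣ))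
    {a : ZMod p} (ha : a ∈ G) : a ≠ 0 := by
  obtain ⟨u, -, rfl⟩ := (mem_G_iff hH).mp ha
  exact u.ne_zero

lemma G_mul_mem (hH : (G : Set (ZMod p)) = (fun u : (ZMod p)ˣ => (u : ZMod p)) '' (H : Set (ZMod p)ˣ))
    {a b : ZMod p} (ha : a ∈ G) (hb : b ∈ G) : a * b ∈ G := by
  obtain ⟨u, hu, rfl⟩ := (mem_G_iff hH).mp ha
  obtain ⟨v, hv, rfl⟩ := (mem_G_iff hH).mp hb
  exact (mem_G_iff hH).mpr ⟨u * v, H.mul_mem hu hv, Units.val_mul u v⟩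

lemma G_inv_mem (hH : (G : Set (ZMod p)) = (fun u : (ZMod p)ˣ => (u : ZMod p)) '' (H : Set (ZMod p)ˣ))
    {a : ZMod p} (ha : a ∈ G) : a⁻¹ ∈ G := by
  obtain ⟨u, hu, rfl⟩ := (mem_G_iff hH).mp ha
  exact (mem_G_iff hH).mpr ⟨u⁻¹, H.inv_mem hu, Units.val_inv_eq_inv_val u⟩

lemma G_div_mem (hH : (G : Set (ZMod p)) = (fun u : (ZMod p)ˣ => (u : ZMod p)) '' (H : Set (ZMod p)ˣ))
    {a b : ZMod p} (ha : a ∈ G) (hb : b ∈ G) : a / b ∈ G := by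
  rw [div_eq_mul_inv]
  exact G_mul_mem hH ha (G_inv_mem hH hb)

/-- Power sums over a multiplicative subgroup vanish when some element has `a^k ≠ 1`. -/
lemma G_sum_pow_eq_zero
    (hH : (G : Set (ZMod p)) = (fun u : (ZMod p)ˣ => (u : ZMod p)) '' (H : Set (ZMod p)ˣ))
    (k : ℕ) (hex : ∃ a ∈ G, a ^ k ≠ 1) : ∑ g ∈ G, g ^ k = 0 := by
  obtain ⟨a, haG, hak⟩ := hex
  have ha0 : a ≠ 0 := G_ne_zero hH haG
  have key : ∑ g ∈ G, (a * g) ^ k = ∑ g ∈ G, g ^ k := by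
    apply Finset.sum_nbij' (i := fun g => a * g) (j := fun g => a⁻¹ * g)
    · intro g hg; exact G_mul_mem hH haG hg
    · intro g hg; exact G_mul_mem hH (G_inv_mem hH haG) hg
    · intro x hx; field_simp
    · intro x hx; field_simp
    · intro x hx; rfl
  have key2 : a ^ k * ∑ g ∈ G, g ^ k = ∑ g ∈ G, g ^ k := by
    rw [Finset.mul_sum]
    simpa [mul_pow] using key
  have : (a ^ k - 1) * ∑ g ∈ G, g ^ k = 0 := by ring_nf; linear_combination key2
  rcases mul_eq_zero.mp this with h | h
  · exact absurd (by linear_combination h) hak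
  · exact h

end aux

/-- For every `ε > 0` there is `C(ε)` such that for every prime `p`, every multiplicative
subgroup `Γ ⊆ F_p` with `C(ε) ≤ |Γ| ≤ p^{6/7-ε}` and every nonzero `ξ`, for every set
`A ⊆ F_p` one has `A/A ≠ ξΓ + 1`. -/
theorem statement10 :
    ∀ ε : ℝ, 0 < ε → ∃ C : ℝ, ∀ (p : ℕ) [Fact p.Prime],
      ∀ G : Finset (ZMod p), IsMulSubgroup G →
        C ≤ (G.card : ℝ) → (G.card : ℝ) ≤ (p : ℝ) ^ ((6 : ℝ) / 7 - ε) →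
        ∀ ξ : ZMod p, ξ ≠ 0 →
        ∀ A : Finset (ZMod p), ratioSet A ≠ (G.image fun g => ξ * g + 1) := by
  intro ε hε
  refine ⟨3, ?_⟩
  intro p hp G hG hC hle ξ hξ A hA
  obtain ⟨H, hH⟩ := hG
  set t := G.card with ht_def
  have hprime : p.Prime := hp.out
  have hp2 : 2 ≤ p := hprime.two_le
  -- numeric bounds: 3 ≤ t and t ≤ p - 2
  have ht3 : 3 ≤ t := by exact_mod_cast hC
  have ht7p6 : t ^ 7 ≤ p ^ 6 := by
    have h1 : (1:ℝ) ≤ (p:ℝ) := by exact_mod_cast Nat.one_le_of_lt hp2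
    have h2 : (p:ℝ) ^ ((6:ℝ)/7 - ε) ≤ (p:ℝ) ^ ((6:ℝ)/7) :=
      Real.rpow_le_rpow_of_exponent_le h1 (by linarith)
    have h3 : (t:ℝ) ≤ (p:ℝ) ^ ((6:ℝ)/7) := le_trans hle h2
    have h4 : (t:ℝ)^(7:ℕ) ≤ (p:ℝ)^(6:ℕ) := by
      calc (t:ℝ)^(7:ℕ) ≤ ((p:ℝ) ^ ((6:ℝ)/7))^(7:ℕ) :=
            pow_le_pow_left₀ (Nat.cast_nonneg t) h3 7
        _ = (p:ℝ)^(6:ℕ) := by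
            rw [← Real.rpow_natCast ((p:ℝ) ^ ((6:ℝ)/7)) 7,
              ← Real.rpow_mul (by positivity),
              show ((6:ℝ)/7 * ((7:ℕ):ℝ)) = ((6:ℕ):ℝ) by norm_num, Real.rpow_natCast]
    exact_mod_cast h4
  have hp5 : 5 ≤ p := by
    have h2187 : 2187 ≤ p ^ 6 := by
      calc 2187 = 3 ^ 7 := by norm_num
        _ ≤ t ^ 7 := Nat.pow_le_pow_left ht3 7
        _ ≤ p ^ 6 := ht7p6
    have hp4 : 4 ≤ p := by
      by_contra h
      push_neg at h
      have : p ^ 6 ≤ 3 ^ 6 := Nat.pow_le_pow_left (by omega) 6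
      omega
    rcases Nat.lt_or_ge p 5 with h | h
    · have hp4' : p = 4 := by omega
      rw [hp4'] at hprime
      norm_num at hprime
    · exact h
  have htp2 : t ≤ p - 2 := by
    by_contra hgt
    push_neg at hgt
    -- then t ≥ p - 1 ≥ 4, and t^7 ≥ (p-1)^7 > p^6
    have hq : (4:ℤ) ≤ (p:ℤ) - 1 := by omega
    have hkey : ((p:ℤ) - 1 + 1)^6 < ((p:ℤ) - 1)^7 := by
      set q : ℤ := (p:ℤ) - 1
      have h1 : (4*(q+1))^6 ≤ (5*q)^6 := by
        apply pow_le_pow_left₀ (by linarith) (by linarith)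
      have h2 : (0:ℤ) < q^6 := pow_pos (by omega) 6
      have h3 : q * q^6 = q^7 := by ring
      nlinarith [h1, h2, h3]
    have ht1 : (p:ℤ) - 1 ≤ (t:ℤ) := by omega
    have h5 : ((p:ℤ)-1)^7 ≤ (t:ℤ)^7 := pow_le_pow_left₀ (by omega) ht1 7
    have h6 : ((t:ℤ))^7 ≤ ((p:ℤ))^6 := by exact_mod_cast ht7p6
    simp only [sub_add_cancel] at hkey
    omega
  have htltp : t < p := by omega
  -- basic facts
  have hne0 : ∀ a ∈ G, a ≠ (0 : ZMod p) := fun a ha => G_ne_zero hH ha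
  -- σ1 and σ2 vanish
  have hex1 : ∃ a ∈ G, a ^ 1 ≠ 1 := by
    have h2 : 1 < G.card := by omega
    obtain ⟨a, haG, b, hbG, hab⟩ := Finset.one_lt_card.mp h2
    by_cases h : a = 1
    · exact ⟨b, hbG, by simpa [h] using fun hb => hab (by rw [h, hb])⟩
    · exact ⟨a, haG, by simpa using h⟩
  have hex2 : ∃ a ∈ G, a ^ 2 ≠ 1 := by
    by_contra hall
    push_neg at hall
    have hsub : G ⊆ {(1 : ZMod p), -1} := by
      intro a ha
      have := hall a ha
      have h2 : a * a = 1 := by rw [← sq]; exact this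
      rcases mul_self_eq_one_iff.mp h2 with h | h <;> simp [h]
    have := Finset.card_le_card hsub
    have hcard2 : ({(1 : ZMod p), -1} : Finset (ZMod p)).card ≤ 2 :=
      Finset.card_insert_le _ _ |>.trans (by simp)
    omega
  have hS1 : ∑ g ∈ G, g = 0 := by
    have := G_sum_pow_eq_zero hH 1 hex1
    simpa using this
  have hS2 : ∑ g ∈ G, g ^ 2 = 0 := G_sum_pow_eq_zero hH 2 hex2
  -- closure under γ ↦ -(ξγ+1)
  have hclose : ∀ γ ∈ G, ξ * γ + 1 ≠ 0 → -(ξ * γ + 1) ∈ G := by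
    intro γ hγ hne
    have hmem : ξ * γ + 1 ∈ ratioSet A := by
      rw [hA]; exact Finset.mem_image.mpr ⟨γ, hγ, rfl⟩
    obtain ⟨a, b, haA, hbA, hb0, hab, hdiv⟩ := mem_ratioSet_aux.mp hmem
    have ha0 : a ≠ 0 := by
      intro h
      rw [h, zero_div] at hdiv
      exact hne hdiv.symm
    have hinv : (ξ * γ + 1)⁻¹ ∈ ratioSet A := by
      refine mem_ratioSet_aux.mpr ⟨b, a, hbA, haA, ha0, fun h => hab h.symm, ?_⟩
      rw [← hdiv, inv_div]
    rw [hA] at hinv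
    obtain ⟨γ', hγ', hγ'eq⟩ := Finset.mem_image.mp hinv
    have hγ'0 : γ' ≠ 0 := hne0 γ' hγ'
    -- (ξγ'+1)(ξγ+1) = 1
    have hprod : (ξ * γ' + 1) * (ξ * γ + 1) = 1 := by
      rw [hγ'eq]; exact inv_mul_cancel₀ hne
    have hval : -(ξ * γ + 1) = γ / γ' := by
      rw [eq_div_iff hγ'0]
      have hξγγ' : ξ * (ξ * (γ * γ') + γ' + γ) = 0 := by linear_combination hprod
      have h0 : ξ * (γ * γ') + γ' + γ = 0 := by
        rcases mul_eq_zero.mp hξγγ' with h | h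
        · exact absurd h hξ
        · exact h
      linear_combination -h0
    rw [hval]
    exact G_div_mem hH hγ hγ'
  -- the affine map φ
  set φ : ZMod p → ZMod p := fun g => -(ξ * g + 1) with hφ_def
  have hφ_inj : Set.InjOn φ ↑(G.filter fun g => ξ * g + 1 ≠ 0) := by
    intro x _ y _ hxy
    simp only [hφ_def, neg_inj, add_left_inj] at hxy
    exact mul_left_cancel₀ hξ hxy
  have hsum_phi : ∑ g ∈ G, φ g = -(ξ * ∑ g ∈ G, g) - (t : ZMod p) := by
    calc ∑ g ∈ G, φ g = ∑ g ∈ G, ((-ξ) * g + (-1)) :=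
          Finset.sum_congr rfl (fun g _ => by simp only [hφ_def]; ring)
      _ = (-ξ) * (∑ g ∈ G, g) + (G.card : ZMod p) * (-1) := by
          rw [Finset.sum_add_distrib, Finset.mul_sum, Finset.sum_const, nsmul_eq_mul]
      _ = -(ξ * ∑ g ∈ G, g) - (t : ZMod p) := by rw [ht_def]; ring
  have hsum_phi2 : ∑ g ∈ G, (φ g) ^ 2 =
      ξ ^ 2 * ∑ g ∈ G, g ^ 2 + 2 * ξ * ∑ g ∈ G, g + (t : ZMod p) := by
    calc ∑ g ∈ G, (φ g) ^ 2 = ∑ g ∈ G, (ξ ^ 2 * g ^ 2 + (2 * ξ * g + 1)) :=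
          Finset.sum_congr rfl (fun g _ => by simp only [hφ_def]; ring)
      _ = ξ ^ 2 * (∑ g ∈ G, g ^ 2) + (2 * ξ * (∑ g ∈ G, g) + (G.card : ZMod p) * 1) := by
          rw [Finset.sum_add_distrib, Finset.sum_add_distrib, Finset.mul_sum, Finset.mul_sum,
            Finset.sum_const, nsmul_eq_mul]
      _ = ξ ^ 2 * ∑ g ∈ G, g ^ 2 + 2 * ξ * ∑ g ∈ G, g + (t : ZMod p) := by
          rw [ht_def]; ring
  have htne : (t : ZMod p) ≠ 0 := by
    intro h
    have := (ZMod.natCast_eq_zero_iff t p).mp h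
    have := Nat.le_of_dvd (by omega) this
    omega
  by_cases hc : (-ξ⁻¹ : ZMod p) ∈ G
  · -- case: ξγ+1 = 0 for γ0 = -ξ⁻¹ ∈ G
    set γ0 : ZMod p := -ξ⁻¹ with hγ0_def
    have hγ0val : ξ * γ0 + 1 = 0 := by
      simp only [hγ0_def]
      field_simp
      ring
    have hG' : G.filter (fun g => ξ * g + 1 ≠ 0) = G.erase γ0 := by
      ext g
      simp only [Finset.mem_filter, Finset.mem_erase]
      constructor
      · rintro ⟨hg, hne⟩
        refine ⟨fun h => hne (by rw [h]; exact hγ0val), hg⟩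
      · rintro ⟨hne, hg⟩
        refine ⟨hg, fun h => hne ?_⟩
        have : ξ * g = ξ * γ0 := by linear_combination h - hγ0val
        exact mul_left_cancel₀ hξ this
    set I : Finset (ZMod p) := (G.erase γ0).image φ with hI_def
    have hIsub : I ⊆ G := by
      intro x hx
      obtain ⟨g, hg, rfl⟩ := Finset.mem_image.mp hx
      obtain ⟨hgne, hgG⟩ := Finset.mem_erase.mp hg
      apply hclose g hgG
      intro h
      apply hgne
      have : ξ * g = ξ * γ0 := by linear_combination h - hγ0val
      exact mul_left_cancel₀ hξ this
    have hIcard : I.card = t - 1 := by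
      rw [hI_def, Finset.card_image_of_injOn (by rw [← hG'] at *; exact hφ_inj),
        Finset.card_erase_of_mem hc]
    have htpos : 0 < t := by omega
    -- find the missing element δ
    have hdiffne : (G \ I).Nonempty := by
      rw [← Finset.card_pos, Finset.card_sdiff_of_subset hIsub]
      omega
    obtain ⟨δ, hδd⟩ := hdiffne
    obtain ⟨hδG, hδI⟩ := Finset.mem_sdiff.mp hδd
    have hins : insert δ I = G := by
      apply Finset.eq_of_subset_of_card_le
      · intro x hx
        rcases Finset.mem_insert.mp hx with h | h
        · rwa [h]
        · exact hIsub h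
      · rw [Finset.card_insert_of_notMem hδI]
        omega
    have hsumI : ∑ x ∈ I, x = ∑ g ∈ G.erase γ0, φ g :=
      Finset.sum_image (by rw [← hG'] at *; intro x hx y hy; exact hφ_inj (by simpa using hx) (by simpa using hy))
    have hsumI2 : ∑ x ∈ I, x ^ 2 = ∑ g ∈ G.erase γ0, (φ g) ^ 2 :=
      Finset.sum_image (by rw [← hG'] at *; intro x hx y hy; exact hφ_inj (by simpa using hx) (by simpa using hy))
    have hφγ0 : φ γ0 = 0 := by simp only [hφ_def, hγ0val, neg_zero]
    have herase : ∑ g ∈ G.erase γ0, φ g = ∑ g ∈ G, φ g := by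
      rw [← Finset.add_sum_erase G φ hc, hφγ0, zero_add]
    have herase2 : ∑ g ∈ G.erase γ0, (φ g) ^ 2 = ∑ g ∈ G, (φ g) ^ 2 := by
      rw [← Finset.add_sum_erase G (fun g => (φ g)^2) hc, hφγ0]
      simp
    -- first moment: δ = t
    have heq1 : δ + ∑ x ∈ I, x = 0 := by
      rw [← hS1, ← hins, Finset.sum_insert hδI]
    have hδval : δ = (t : ZMod p) := by
      rw [hsumI, herase, hsum_phi, hS1] at heq1
      linear_combination heq1
    -- second moment: δ² = -t
    have heq2 : δ ^ 2 + ∑ x ∈ I, x ^ 2 = 0 := by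
      rw [← hS2, ← hins, Finset.sum_insert hδI]
    have hδ2val : δ ^ 2 + (t : ZMod p) = 0 := by
      rw [hsumI2, herase2, hsum_phi2, hS1, hS2] at heq2
      linear_combination heq2
    -- conclude t(t+1) = 0 hence p ∣ t+1, contradiction
    have hfin : ((t : ZMod p) + 1) * (t : ZMod p) = 0 := by
      rw [hδval] at hδ2val
      linear_combination hδ2val
    rcases mul_eq_zero.mp hfin with h | h
    · have : ((t + 1 : ℕ) : ZMod p) = 0 := by push_cast; exact h
      have := (ZMod.natCast_eq_zero_iff (t+1) p).mp this
      have := Nat.le_of_dvd (by omega) this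
      omega
    · exact htne h
  · -- case: ξγ+1 ≠ 0 on all of G, so φ permutes G
    have hG' : G.filter (fun g => ξ * g + 1 ≠ 0) = G := by
      apply Finset.filter_true_of_mem
      intro g hg h
      apply hc
      have : g = -ξ⁻¹ := by
        field_simp
        linear_combination h
      rwa [this] at hg
    set I : Finset (ZMod p) := G.image φ with hI_def
    have hIsub : I ⊆ G := by
      intro x hx
      obtain ⟨g, hg, rfl⟩ := Finset.mem_image.mp hx
      apply hclose g hg
      intro h
      apply hc
      have : g = -ξ⁻¹ := by
        field_simp
        linear_combination h
      rwa [this] at hg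
    have hinj : Set.InjOn φ ↑G := by rw [← hG']; exact hφ_inj
    have hIcard : I.card = t := Finset.card_image_of_injOn hinj
    have hIG : I = G := Finset.eq_of_subset_of_card_le hIsub (by omega)
    have : ∑ x ∈ I, x = ∑ g ∈ G, φ g :=
      Finset.sum_image (fun x hx y hy => hinj hx hy)
    rw [hIG, hsum_phi, hS1] at this
    have h0 : (t : ZMod p) = 0 := by linear_combination this
    exact htne h0
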